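/- Let ξ be as defined and let w ∈ (1, e) be a positive real. Then for every natural number n, the (2ⁿ - 1)-th iterate of g(w) = e² w e^{2πi ξ(|w|)} satisfies g^{2ⁿ-1}(w) = e^{2(2ⁿ-1)} w e^{2πi n ln w}. -/

import Mathlib

/-- The function ξ from the paper. -/
noncomputable def xi (r : ℝ) : ℝ :=
  if r ≤ 1 then 0
  else
    if Even ⌊Real.log r⌋ then
      (Real.log r - (⌊Real.log r⌋ : ℝ)) /
        (2 : ℝ) ^ (⌊Real.logb 2 (((⌊Real.log r / 2⌋ + 1 : ℤ) : ℝ))⌋)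
    else
      (1 - (Real.log r - (⌊Real.log r⌋ : ℝ))) /
        (2 : ℝ) ^ (⌊Real.logb 2 (((⌊Real.log r / 2⌋ + 1 : ℤ) : ℝ))⌋)

noncomputable def gMap (w : ℂ) : ℂ :=
  (Real.exp 2 : ℂ) * w * Complex.exp (2 * Real.pi * Complex.I * xi ‖w‖)

lemma xi_exp_mul (w : ℝ) (hw : w ∈ Set.Ioo 1 (Real.exp 1)) (j : ℕ) :
    xi (Real.exp (2 * j) * w) = Real.log w * ((2 : ℝ) ^ (Nat.log 2 (j + 1)))⁻¹ := by
  obtain ⟨hw1, hwe⟩ := hw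
  have hw0 : (0:ℝ) < w := lt_trans one_pos hw1
  have ht0 : 0 < Real.log w := Real.log_pos hw1
  have ht1 : Real.log w < 1 := by
    have := Real.log_lt_log hw0 hwe
    simpa using this
  have hr1 : 1 < Real.exp (2 * j) * w := by
    have h1 : (1:ℝ) ≤ Real.exp (2 * j) := Real.one_le_exp (by positivity)
    nlinarith
  have hlog : Real.log (Real.exp (2 * j) * w) = 2 * j + Real.log w := by
    rw [Real.log_mul (Real.exp_ne_zero _) hw0.ne', Real.log_exp]
  have hfloor : ⌊Real.log (Real.exp (2 * j) * w)⌋ = 2 * j := by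
    rw [hlog, show (2 * (j:ℝ) + Real.log w) = Real.log w + ((2 * j : ℤ) : ℝ) by
      push_cast; ring, Int.floor_add_intCast]
    have : ⌊Real.log w⌋ = 0 := Int.floor_eq_zero_iff.mpr ⟨ht0.le, ht1⟩
    omega
  have hfloor2 : ⌊Real.log (Real.exp (2 * j) * w) / 2⌋ = (j : ℤ) := by
    rw [hlog, show ((2 * (j:ℝ) + Real.log w) / 2) = Real.log w / 2 + ((j : ℤ) : ℝ) by
      push_cast; ring, Int.floor_add_intCast]
    have : ⌊Real.log w / 2⌋ = 0 := Int.floor_eq_zero_iff.mpr ⟨by linarith, by linarith⟩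
    omega
  have hlb : ⌊Real.logb 2 (((j : ℤ) + 1 : ℤ) : ℝ)⌋ = (Nat.log 2 (j + 1) : ℤ) := by
    have h := Real.floor_logb_natCast (b := 2) (r := ((j + 1 : ℕ) : ℝ)) (by positivity)
    rw [Int.log_natCast] at h
    push_cast at h ⊢
    convert h using 3
  unfold xi
  rw [if_neg (not_le.mpr hr1), hfloor2, hlb, hfloor]
  rw [if_pos (by exact even_two_mul (j:ℤ))]
  rw [hlog, zpow_natCast]
  push_cast
  ring

lemma sum_inv_pow_log (n : ℕ) :
    ∑ j ∈ Finset.range (2 ^ n - 1), ((2 : ℝ) ^ (Nat.log 2 (j + 1)))⁻¹ = n := by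
  induction n with
  | zero => simp
  | succ n ih =>
    have hp : 0 < 2 ^ n := pow_pos (by norm_num) n
    have h2 : 2 ^ (n + 1) = 2 * 2 ^ n := by rw [pow_succ]; ring
    have hle : 2 ^ n - 1 ≤ 2 ^ (n + 1) - 1 := by omega
    rw [Finset.range_eq_Ico, ← Finset.sum_Ico_consecutive _ (Nat.zero_le _) hle,
      ← Finset.range_eq_Ico, ih]
    have hconst : ∀ j ∈ Finset.Ico (2 ^ n - 1) (2 ^ (n + 1) - 1),
        ((2 : ℝ) ^ (Nat.log 2 (j + 1)))⁻¹ = ((2 : ℝ) ^ n)⁻¹ := by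
      intro j hj
      simp only [Finset.mem_Ico] at hj
      have : Nat.log 2 (j + 1) = n :=
        Nat.log_eq_of_pow_le_of_lt_pow (by omega) (by omega)
      rw [this]
    have hcard : 2 ^ (n + 1) - 1 - (2 ^ n - 1) = 2 ^ n := by omega
    rw [Finset.sum_congr rfl hconst, Finset.sum_const, Nat.card_Ico, hcard, nsmul_eq_mul]
    push_cast
    rw [mul_inv_cancel₀ (by positivity : ((2:ℝ)^n) ≠ 0)]

lemma gMap_iter (w : ℝ) (hw : w ∈ Set.Ioo 1 (Real.exp 1)) (m : ℕ) :
    gMap^[m] (w : ℂ) = (Real.exp (2 * m) : ℂ) * (w : ℂ) *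
      Complex.exp (2 * Real.pi * Complex.I *
        ((∑ j ∈ Finset.range m, xi (Real.exp (2 * j) * w) : ℝ))) := by
  have hw0 : (0:ℝ) < w := lt_trans one_pos hw.1
  induction m with
  | zero => simp
  | succ m ih =>
    rw [Function.iterate_succ_apply', ih]
    have hre : ∀ S : ℝ, (2 * (Real.pi : ℂ) * Complex.I * (S : ℂ)).re = 0 := by
      intro S; simp
    set S : ℝ := ∑ j ∈ Finset.range m, xi (Real.exp (2 * j) * w) with hS
    have habs : ‖(Real.exp (2 * m) : ℂ) * (w : ℂ) *
        Complex.exp (2 * Real.pi * Complex.I * (S : ℂ))‖ = Real.exp (2 * m) * w := by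
      rw [norm_mul, norm_mul, Complex.norm_exp, hre, Real.exp_zero, Complex.norm_real,
        Complex.norm_real, Real.norm_eq_abs, Real.norm_eq_abs, abs_of_pos (Real.exp_pos _), abs_of_pos hw0, mul_one]
    unfold gMap
    rw [habs]
    have e1 : Real.exp (2 * ((m : ℕ) + 1 : ℕ)) = Real.exp 2 * Real.exp (2 * m) := by
      rw [← Real.exp_add]; congr 1; push_cast; ring
    have e2 : ∑ j ∈ Finset.range (m + 1), xi (Real.exp (2 * j) * w)
        = S + xi (Real.exp (2 * (m : ℝ)) * w) := by
      rw [Finset.sum_range_succ, hS]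
    rw [e2, e1, Complex.ofReal_add, mul_add, Complex.exp_add, Complex.ofReal_mul]
    ring

theorem gMap_iterate_pow_two_sub_one (w : ℝ) (hw : w ∈ Set.Ioo 1 (Real.exp 1)) (n : ℕ) :
    gMap^[2 ^ n - 1] (w : ℂ) =
      (Real.exp (2 * (2 ^ n - 1 : ℕ)) : ℂ) * (w : ℂ) *
        Complex.exp (2 * Real.pi * Complex.I * ((n : ℝ) * Real.log w)) := by
  rw [gMap_iter w hw (2 ^ n - 1)]
  have hsum : ∑ j ∈ Finset.range (2 ^ n - 1), xi (Real.exp (2 * j) * w)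
      = (n : ℝ) * Real.log w := by
    calc ∑ j ∈ Finset.range (2 ^ n - 1), xi (Real.exp (2 * j) * w)
        = ∑ j ∈ Finset.range (2 ^ n - 1), Real.log w * ((2:ℝ) ^ (Nat.log 2 (j+1)))⁻¹ :=
          Finset.sum_congr rfl (fun j _ => xi_exp_mul w hw j)
      _ = Real.log w * ∑ j ∈ Finset.range (2 ^ n - 1), ((2:ℝ) ^ (Nat.log 2 (j+1)))⁻¹ := by
          rw [Finset.mul_sum]
      _ = (n : ℝ) * Real.log w := by rw [sum_inv_pow_log]; ring
  rw [hsum]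
  norm_cast
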